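/- arXiv:1305.5646 — 2 statements merged into one kernel-verified Lean document; each statement's English description precedes it below -/
import Mathlib

section
/- Let X be an R^n-valued random vector with finite mean vector μ = E(X) and positive definite covariance matrix V = Cov(X). Then for every ε > 0, P((X − μ)ᵀ V⁻¹ (X − μ) ≥ ε) ≤ n/ε. -/
open MeasureTheory Matrix

theorem multivariate_chebyshev {Ω : Type*} [MeasurableSpace Ω] (P : Measure Ω)
    [IsProbabilityMeasure P] (n : ℕ) (X : Ω → Fin n → ℝ)
    (hX : ∀ i, Integrable (fun ω => X ω i) P)
    (hX2 : ∀ i j, Integrable (fun ω => X ω i * X ω j) P)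
    (μ : Fin n → ℝ) (hμ : ∀ i, μ i = ∫ ω, X ω i ∂P)
    (V : Matrix (Fin n) (Fin n) ℝ)
    (hV : ∀ i j, V i j = ∫ ω, (X ω i - μ i) * (X ω j - μ j) ∂P)
    (hVpd : V.PosDef) :
    ∀ ε : ℝ, 0 < ε →
      (P {ω | ε ≤ (X ω - μ) ⬝ᵥ (V⁻¹ *ᵥ (X ω - μ))}).toReal ≤ n / ε := by
  intro ε hε
  set f : Ω → ℝ := fun ω => (X ω - μ) ⬝ᵥ (V⁻¹ *ᵥ (X ω - μ)) with hfdef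
  -- integrability of centered products
  have hg : ∀ i j, Integrable (fun ω => (X ω i - μ i) * (X ω j - μ j)) P := by
    intro i j
    have h1 : Integrable (fun ω =>
        X ω i * X ω j - μ i * X ω j - X ω i * μ j + μ i * μ j) P :=
      (((hX2 i j).sub ((hX j).const_mul (μ i))).sub ((hX i).mul_const (μ j))).add
        (integrable_const _)
    convert h1 using 2 with ω
    ring
  -- rewrite f as a double sum
  have hf : ∀ ω, f ω = ∑ i, ∑ j, V⁻¹ i j * ((X ω i - μ i) * (X ω j - μ j)) := by
    intro ω
    simp only [hfdef, dotProduct, mulVec, Pi.sub_apply, Finset.mul_sum, dotProduct]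
    refine Finset.sum_congr rfl fun i _ => Finset.sum_congr rfl fun j _ => by ring
  have hf_int : Integrable f P := by
    have : Integrable (fun ω => ∑ i, ∑ j,
        V⁻¹ i j * ((X ω i - μ i) * (X ω j - μ j))) P :=
      integrable_finset_sum _ fun i _ => integrable_finset_sum _ fun j _ =>
        (hg i j).const_mul _
    exact this.congr (Filter.Eventually.of_forall fun ω => (hf ω).symm)
  -- V is symmetric
  have hVsymm : ∀ i j, V i j = V j i := by
    intro i j
    rw [hV, hV]
    congr 1 with ω
    ring
  -- the integral of f equals n
  have hint : ∫ ω, f ω ∂P = (n : ℝ) := by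
    calc ∫ ω, f ω ∂P
        = ∫ ω, ∑ i, ∑ j, V⁻¹ i j * ((X ω i - μ i) * (X ω j - μ j)) ∂P := by
          exact integral_congr_ae (Filter.Eventually.of_forall hf)
      _ = ∑ i, ∑ j, V⁻¹ i j * V i j := by
          refine (integral_finset_sum _ fun i _ => integrable_finset_sum _ fun j _ =>
            (hg i j).const_mul _).trans ?_
          refine Finset.sum_congr rfl fun i _ => ?_
          refine (integral_finset_sum _ fun j _ => (hg i j).const_mul _).trans ?_
          refine Finset.sum_congr rfl fun j _ => ?_
          rw [integral_const_mul, ← hV]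
      _ = (V⁻¹ * V).trace := by
          rw [Matrix.trace]
          refine Finset.sum_congr rfl fun i _ => ?_
          simp only [Matrix.diag_apply, Matrix.mul_apply]
          exact Finset.sum_congr rfl fun j _ => by rw [hVsymm i j]
      _ = (n : ℝ) := by
          rw [Matrix.nonsing_inv_mul V (isUnit_iff_ne_zero.mpr hVpd.det_pos.ne'),
            Matrix.trace_one]
          simp
  have hnonneg : 0 ≤ᵐ[P] f := by
    refine Filter.Eventually.of_forall fun ω => ?_
    have := hVpd.inv.posSemidef.dotProduct_mulVec_nonneg (X ω - μ)
    simpa [hfdef] using this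
  have hm := mul_meas_ge_le_integral_of_nonneg hnonneg hf_int ε
  rw [hint] at hm
  rw [le_div_iff₀ hε]
  simp only [Measure.real] at hm
  linarith
end

section
/- Let X be an R^n-valued random vector whose covariance matrix V is symmetric positive semidefinite of rank m−1 < n, with eigenvalues λ₁ ≥ … ≥ λ_{m−1} > 0 = λ_m = … = λₙ and spectral decomposition V = T diag(λ₁,…,λₙ) Tᵀ. Let C = diag(λ₁⁻¹,…,λ_{m−1}⁻¹, 0,…,0). Then for every ε > 0, P((X − μ)ᵀ T C Tᵀ (X − μ) < ε) ≥ 1 − (m−1)/ε. -/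
open MeasureTheory Matrix

theorem multivariate_chebyshev_singular {Ω : Type*} [MeasurableSpace Ω] (P : Measure Ω)
    [IsProbabilityMeasure P] (n m : ℕ) (hm2 : 2 ≤ m) (hmn : m ≤ n)
    (X : Ω → Fin n → ℝ)
    (hX : ∀ i, Integrable (fun ω => X ω i) P)
    (hX2 : ∀ i j, Integrable (fun ω => X ω i * X ω j) P)
    (μ : Fin n → ℝ) (hμ : ∀ i, μ i = ∫ ω, X ω i ∂P)
    (V : Matrix (Fin n) (Fin n) ℝ)
    (hV : ∀ i j, V i j = ∫ ω, (X ω i - μ i) * (X ω j - μ j) ∂P)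
    (lam : Fin n → ℝ) (hmono : ∀ i j : Fin n, i ≤ j → lam j ≤ lam i)
    (hpos : ∀ i : Fin n, i.val < m - 1 → 0 < lam i)
    (hzero : ∀ i : Fin n, m - 1 ≤ i.val → lam i = 0)
    (T : Matrix (Fin n) (Fin n) ℝ) (hT : Tᵀ * T = 1)
    (hdecomp : V = T * Matrix.diagonal lam * Tᵀ)
    (C : Matrix (Fin n) (Fin n) ℝ)
    (hC : C = Matrix.diagonal fun i => if i.val < m - 1 then (lam i)⁻¹ else 0) :
    ∀ ε : ℝ, 0 < ε →
      1 - (m - 1 : ℝ) / ε ≤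
        (P {ω | (X ω - μ) ⬝ᵥ ((T * C * Tᵀ) *ᵥ (X ω - μ)) < ε}).toReal := by
  intro ε hε
  set M : Matrix (Fin n) (Fin n) ℝ := T * C * Tᵀ with hM
  set Q : Ω → ℝ := fun ω => (X ω - μ) ⬝ᵥ (M *ᵥ (X ω - μ)) with hQ
  -- integrability of the centered products
  have hZint : ∀ j k : Fin n,
      Integrable (fun ω => (X ω j - μ j) * (X ω k - μ k)) P := by
    intro j k
    have h : (fun ω => (X ω j - μ j) * (X ω k - μ k))
        = fun ω => X ω j * X ω k - μ j * X ω k - μ k * X ω j + μ j * μ k := by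
      funext ω; ring
    rw [h]
    exact (((hX2 j k).sub ((hX k).const_mul (μ j))).sub
      ((hX j).const_mul (μ k))).add (integrable_const _)
  -- expansion of the quadratic form
  have hQexp : ∀ ω, Q ω = ∑ j, ∑ k, M j k * ((X ω j - μ j) * (X ω k - μ k)) := by
    intro ω
    simp only [hQ, dotProduct, mulVec, Pi.sub_apply, Finset.mul_sum]
    exact Finset.sum_congr rfl fun j _ => Finset.sum_congr rfl fun k _ => by ring
  have hQint : Integrable Q P := by
    have h := integrable_finset_sum (μ := P) Finset.univ
      (fun j (_ : j ∈ Finset.univ) => integrable_finset_sum (μ := P) Finset.univ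
        (fun k (_ : k ∈ Finset.univ) => (hZint j k).const_mul (M j k)))
    exact h.congr (Filter.Eventually.of_forall fun ω => (hQexp ω).symm)
  -- value of the integral
  have hQval : ∫ ω, Q ω ∂P = ∑ j, ∑ k, M j k * V j k := by
    rw [integral_congr_ae (Filter.Eventually.of_forall hQexp),
      integral_finset_sum _ (fun j _ => integrable_finset_sum _
        (fun k _ => (hZint j k).const_mul (M j k)))]
    refine Finset.sum_congr rfl fun j _ => ?_
    rw [integral_finset_sum _ (fun k _ => (hZint j k).const_mul (M j k))]
    refine Finset.sum_congr rfl fun k _ => ?_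
    rw [integral_const_mul, ← hV]
  -- the trace computation
  have hVsymm : Vᵀ = V := by
    ext j k
    rw [Matrix.transpose_apply, hV, hV]
    exact integral_congr_ae (Filter.Eventually.of_forall fun ω => by ring)
  have htrace : ∑ j, ∑ k, M j k * V j k = (m - 1 : ℕ) := by
    have h1 : ∑ j, ∑ k, M j k * V j k = Matrix.trace (M * Vᵀ) := by
      simp only [Matrix.trace, Matrix.diag, Matrix.mul_apply, Matrix.transpose_apply]
    rw [h1, hVsymm, hM, hdecomp]
    have h2 : T * C * Tᵀ * (T * Matrix.diagonal lam * Tᵀ)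
        = T * ((C * Matrix.diagonal lam) * Tᵀ) := by
      simp only [Matrix.mul_assoc]
      rw [← Matrix.mul_assoc Tᵀ T, hT, Matrix.one_mul]
    rw [h2, Matrix.trace_mul_comm, Matrix.mul_assoc, Matrix.mul_assoc, hT, Matrix.mul_one,
      hC, Matrix.diagonal_mul_diagonal, Matrix.trace_diagonal]
    have h3 : ∀ i : Fin n, (if i.val < m - 1 then (lam i)⁻¹ else 0) * lam i
        = if i.val < m - 1 then (1 : ℝ) else 0 := by
      intro i
      by_cases hi : i.val < m - 1
      · simp [hi, inv_mul_cancel₀ (hpos i hi).ne']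
      · simp [hi]
    rw [Finset.sum_congr rfl fun i _ => h3 i, Fin.sum_univ_eq_sum_range
      (fun i => if i < m - 1 then (1 : ℝ) else 0) n]
    rw [← Finset.sum_subset (Finset.range_subset_range.2 (le_trans (Nat.sub_le m 1) hmn))
      (fun i _ hi => if_neg (fun h => hi (Finset.mem_range.2 h)))]
    rw [Finset.sum_congr rfl (fun i hi => if_pos (Finset.mem_range.1 hi))]
    simp
  -- nonnegativity of the quadratic form
  have hQnn : ∀ ω, 0 ≤ Q ω := by
    intro ω
    have h1 : M *ᵥ (X ω - μ) = T *ᵥ (C *ᵥ (Tᵀ *ᵥ (X ω - μ))) := by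
      rw [Matrix.mulVec_mulVec, Matrix.mulVec_mulVec, hM]
    have h2 : Q ω = (Tᵀ *ᵥ (X ω - μ)) ⬝ᵥ (C *ᵥ (Tᵀ *ᵥ (X ω - μ))) := by
      rw [hQ]
      show (X ω - μ) ⬝ᵥ (M *ᵥ (X ω - μ)) = _
      rw [h1, Matrix.dotProduct_mulVec (X ω - μ) T, ← Matrix.mulVec_transpose,
        Matrix.dotProduct_mulVec]
    rw [h2, hC]
    simp only [dotProduct, Matrix.mulVec_diagonal]
    refine Finset.sum_nonneg fun i _ => ?_
    by_cases hi : i.val < m - 1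
    · simp only [hi, if_true]
      have : 0 ≤ (lam i)⁻¹ := (inv_nonneg).2 (hpos i hi).le
      nlinarith [sq_nonneg ((Tᵀ *ᵥ (X ω - μ)) i)]
    · simp [hi]
  -- Markov's inequality
  have hmark := mul_meas_ge_le_integral_of_nonneg
    (Filter.Eventually.of_forall hQnn) hQint ε
  rw [hQval, htrace] at hmark
  have hcast : ((m - 1 : ℕ) : ℝ) = (m : ℝ) - 1 := by
    have : 1 ≤ m := le_trans one_le_two hm2
    push_cast [this]; ring
  rw [hcast] at hmark
  -- pass to the complement
  have hns : NullMeasurableSet {ω | ε ≤ Q ω} P :=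
    hQint.aemeasurable.nullMeasurable measurableSet_Ici
  have hcompl : {ω | (X ω - μ) ⬝ᵥ ((T * C * Tᵀ) *ᵥ (X ω - μ)) < ε} = {ω | ε ≤ Q ω}ᶜ := by
    ext ω; simp [hQ, hM, not_le]
  rw [hcompl, measure_compl₀ hns (measure_ne_top P _), measure_univ,
    ENNReal.toReal_sub_of_le prob_le_one ENNReal.one_ne_top, ENNReal.toReal_one]
  have hle : (P {ω | ε ≤ Q ω}).toReal ≤ ((m : ℝ) - 1) / ε := by
    rw [le_div_iff₀ hε]
    have hmark' : ε * (P {ω | ε ≤ Q ω}).toReal ≤ (m : ℝ) - 1 := hmark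
    nlinarith [hmark']
  linarith
end
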